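/- Let (C, τ', τ) be an infinitesimal noncommutative probability space and A, B ∗-subalgebras with 1 ∈ B such that the ideal generated by A over B is contained in ker(τ). If the pair (A, B) is cyclically monotone with respect to (τ', τ), i.e., τ'(a_1 b_1 ⋯ a_n b_n) = τ'(a_1 ⋯ a_n) τ(b_1) ⋯ τ(b_n) for all a_j ∈ A, b_j ∈ B, then A and B are infinitesimally free: setting τ_t = τ + t τ', one has τ_t((a_1 - τ_t(a_1)1)(b_1 - τ_t(b_1)1) ⋯ (a_n - τ_t(a_n)1)(b_n - τ_t(b_n)1)) = o(t) as t → 0, for all n ∈ ℕ, a_j ∈ A, b_j ∈ B. -/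

import Mathlib

open Asymptotics

/-- The set of words `b_0 a_1 b_1 ⋯ a_n b_n` (`n ≥ 1`, `a_i ∈ A`, `b_i ∈ B`) whose span is
the ideal generated by `A` over `B`. -/
def cyclicWords {C : Type*} [Ring C] [StarRing C] [Algebra ℂ C] [StarModule ℂ C]
    (A : NonUnitalStarSubalgebra ℂ C) (B : StarSubalgebra ℂ C) : Set C :=
  {w | ∃ (n : ℕ) (a b : ℕ → C), 1 ≤ n ∧ (∀ i, a i ∈ A) ∧ (∀ i, b i ∈ B) ∧
    w = b 0 * ((List.range n).map (fun i => a (i + 1) * b (i + 1))).prod}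

section Words
variable {C : Type*} [Ring C] [StarRing C] [Algebra ℂ C] [StarModule ℂ C]
  (A : NonUnitalStarSubalgebra ℂ C) (B : StarSubalgebra ℂ C)

/-- Words with letters in `A ∪ B` containing at least one `A`-letter. -/
def aWords : Set C :=
  {w | ∃ (m : ℕ) (c : ℕ → C), (∀ i, c i ∈ (A : Set C) ∪ (B : Set C)) ∧
    (∃ i, i < m ∧ c i ∈ A) ∧ w = ((List.range m).map c).prod}

lemma aWords_mul_letter {w x : C} (hw : w ∈ aWords A B)
    (hx : x ∈ (A : Set C) ∪ (B : Set C)) : w * x ∈ aWords A B := by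
  obtain ⟨m, c, hc, ⟨i, him, hiA⟩, rfl⟩ := hw
  refine ⟨m + 1, fun k => if k = m then x else c k, ?_,
    ⟨i, by omega, by simp [Nat.ne_of_lt him, hiA]⟩, ?_⟩
  · intro k
    by_cases h : k = m
    · simpa [h] using hx
    · simpa [h] using hc k
  · simp only [List.range_succ, List.map_append, List.map_singleton, List.prod_append,
      List.prod_singleton, if_pos rfl]
    congr 1
    exact congrArg List.prod (List.map_congr_left fun k hk =>
      (if_neg (Nat.ne_of_lt (List.mem_range.mp hk))).symm)

lemma prod_mem_B {m : ℕ} {c : ℕ → C} (hc : ∀ i, i < m → c i ∈ B) :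
    ((List.range m).map c).prod ∈ B := by
  induction m with
  | zero => simpa using one_mem B
  | succ k ih =>
      simp only [List.range_succ, List.map_append, List.map_singleton, List.prod_append,
        List.prod_singleton]
      exact mul_mem (ih fun i hi => hc i (by omega)) (hc k (by omega))

lemma cyclicWords_mul_letter {w x : C} (hw : w ∈ cyclicWords A B)
    (hx : x ∈ (A : Set C) ∪ (B : Set C)) : w * x ∈ cyclicWords A B := by
  obtain ⟨n, a, b, hn, hA, hB, rfl⟩ := hw
  rcases hx with hxA | hxB
  · -- append a new pair (x, 1)
    refine ⟨n + 1, fun k => if k = n + 1 then x else a k, fun k => if k = n + 1 then 1 else b k,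
      by omega, ?_, ?_, ?_⟩
    · intro k; by_cases h : k = n + 1
      · simpa [h] using hxA
      · simpa [h] using hA k
    · intro k; by_cases h : k = n + 1
      · simp [h, one_mem B]
      · simpa [h] using hB k
    · simp only [List.range_succ, List.map_append, List.map_singleton, List.prod_append,
        List.prod_singleton, if_pos rfl, mul_one, if_neg (show (0:ℕ) ≠ n + 1 from by omega)]
      rw [show ((List.range n).map fun i =>
            (if i + 1 = n + 1 then x else a (i + 1)) * if i + 1 = n + 1 then 1 else b (i + 1))
            = (List.range n).map fun i => a (i + 1) * b (i + 1) from
          List.map_congr_left fun j hj => by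
            have : j + 1 ≠ n + 1 := by have := List.mem_range.mp hj; omega
            simp [this, Nat.ne_of_lt (List.mem_range.mp hj)]]
      rw [mul_assoc]
      simp
  · -- merge x into the last b
    obtain ⟨k, rfl⟩ : ∃ k, n = k + 1 := ⟨n - 1, by omega⟩
    refine ⟨k + 1, a, fun j => if j = k + 1 then b j * x else b j, by omega, hA, ?_, ?_⟩
    · intro j; by_cases h : j = k + 1
      · simpa [h] using mul_mem (hB _) hxB
      · simpa [h] using hB j
    · simp only [List.range_succ, List.map_append, List.map_singleton, List.prod_append,
        List.prod_singleton, if_pos rfl, if_neg (show (0:ℕ) ≠ k + 1 from by omega)]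
      rw [show ((List.range k).map fun i =>
            a (i + 1) * if i + 1 = k + 1 then b (i + 1) * x else b (i + 1))
            = (List.range k).map fun i => a (i + 1) * b (i + 1) from
          List.map_congr_left fun j hj => by
            have : j + 1 ≠ k + 1 := by have := List.mem_range.mp hj; omega
            simp [this, Nat.ne_of_lt (List.mem_range.mp hj)]]
      simp only [mul_assoc]
      simp

lemma aWords_subset_cyclicWords : aWords A B ⊆ cyclicWords A B := by
  rintro w ⟨m, c, hc, hex, rfl⟩
  induction m with
  | zero => obtain ⟨i, hi, _⟩ := hex; omega
  | succ k ih =>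
      simp only [List.range_succ, List.map_append, List.map_singleton, List.prod_append,
        List.prod_singleton]
      by_cases h : ∃ i, i < k ∧ c i ∈ A
      · exact cyclicWords_mul_letter A B (ih h) (hc k)
      · have hck : c k ∈ A := by
          obtain ⟨i, hi, hiA⟩ := hex
          rcases Nat.lt_succ_iff_lt_or_eq.mp hi with h' | rfl
          · exact absurd ⟨i, h', hiA⟩ h
          · exact hiA
        have hBk : ((List.range k).map c).prod ∈ B := by
          apply prod_mem_B
          intro i hi
          rcases hc i with h' | h'
          · exact absurd ⟨i, hi, h'⟩ h
          · exact h'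
        exact ⟨1, fun _ => c k, fun j => if j = 0 then ((List.range k).map c).prod else 1,
          le_refl 1, fun _ => hck, fun j => by by_cases h : j = 0 <;> simp [h, hBk, one_mem B],
          by simp⟩

end Words

section MapLin
open Polynomial
variable {R : Type*} [Ring R] [Algebra ℂ R]

/-- Apply a linear functional to the coefficients of a polynomial. -/
noncomputable def mapLin (φ : R →ₗ[ℂ] ℂ) (p : R[X]) : ℂ[X] :=
  ⟨AddMonoidAlgebra.ofCoeff (p.toFinsupp.coeff.mapRange φ (map_zero φ))⟩

lemma coeff_mapLin (φ : R →ₗ[ℂ] ℂ) (p : R[X]) (k : ℕ) :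
    (mapLin φ p).coeff k = φ (p.coeff k) := rfl

lemma mapLin_add (φ : R →ₗ[ℂ] ℂ) (p q : R[X]) :
    mapLin φ (p + q) = mapLin φ p + mapLin φ q := by
  ext k; simp [coeff_mapLin, map_add]

lemma mapLin_monomial (φ : R →ₗ[ℂ] ℂ) (k : ℕ) (x : R) :
    mapLin φ (monomial k x) = monomial k (φ x) := by
  ext j
  simp only [coeff_mapLin, coeff_monomial]
  split <;> simp

lemma eval_mapLin (φ : R →ₗ[ℂ] ℂ) (p : R[X]) (t : ℂ) :
    (mapLin φ p).eval t = φ (Polynomial.eval₂ (RingHom.id R) (algebraMap ℂ R t) p) := by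
  induction p using Polynomial.induction_on' with
  | add p q hp hq => simp [mapLin_add, Polynomial.eval₂_add, map_add, hp, hq]
  | monomial k x =>
      rw [mapLin_monomial, Polynomial.eval_monomial, Polynomial.eval₂_monomial, RingHom.id_apply,
        ← map_pow, ← Algebra.commutes, ← Algebra.smul_def, map_smul, smul_eq_mul, mul_comm]
end MapLin
open Polynomial
section Poly
variable {R : Type*} [Ring R] [Algebra ℂ R]

omit [Algebra ℂ R] in
lemma coeff_one_mul' (p q : R[X]) :
    (p * q).coeff 1 = p.coeff 0 * q.coeff 1 + p.coeff 1 * q.coeff 0 := by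
  rw [coeff_mul, show Finset.HasAntidiagonal.antidiagonal (1 : ℕ) = {(0,1),(1,0)} from rfl]
  simp

noncomputable def bcF (τ : R →ₗ[ℂ] ℂ) (b : ℕ → R) (i : ℕ) : R :=
  b i - algebraMap ℂ R (τ (b i))

noncomputable def Fp (τ τ' : R →ₗ[ℂ] ℂ) (a b : ℕ → R) (i : ℕ) : R[X] :=
  C (a i * bcF τ b i)
    + C (-(a i * algebraMap ℂ R (τ' (b i))) - algebraMap ℂ R (τ' (a i)) * bcF τ b i) * X
    + C (algebraMap ℂ R (τ' (a i)) * algebraMap ℂ R (τ' (b i))) * X ^ 2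

noncomputable def Pp (τ τ' : R →ₗ[ℂ] ℂ) (a b : ℕ → R) (n : ℕ) : R[X] :=
  ((List.range n).map (Fp τ τ' a b)).prod

lemma coeff_Fp_zero (τ τ' : R →ₗ[ℂ] ℂ) (a b : ℕ → R) (i : ℕ) :
    (Fp τ τ' a b i).coeff 0 = a i * bcF τ b i := by
  simp [Fp, coeff_one]

lemma coeff_Fp_one (τ τ' : R →ₗ[ℂ] ℂ) (a b : ℕ → R) (i : ℕ) :
    (Fp τ τ' a b i).coeff 1
      = -(a i * algebraMap ℂ R (τ' (b i))) - algebraMap ℂ R (τ' (a i)) * bcF τ b i := by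
  have h : (C (algebraMap ℂ R (τ' (a i))) * C (algebraMap ℂ R (τ' (b i))) * X ^ 2).coeff 1 = 0 := by
    rw [pow_two, ← mul_assoc, coeff_mul_X (n := 0)]
    simp [coeff_C_mul]
  simp [Fp, coeff_one, coeff_C_mul, coeff_X, h]

lemma coeff_Pp_zero (τ τ' : R →ₗ[ℂ] ℂ) (a b : ℕ → R) (n : ℕ) :
    (Pp τ τ' a b n).coeff 0 = ((List.range n).map (fun i => a i * bcF τ b i)).prod := by
  induction n with
  | zero => simp [Pp, coeff_one]
  | succ k ih =>
      simp only [Pp, List.range_succ, List.map_append, List.map_singleton, List.prod_append,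
        List.prod_singleton] at *
      rw [mul_coeff_zero, ih, coeff_Fp_zero]

lemma eval₂_Fp (τ τ' : R →ₗ[ℂ] ℂ) (a b : ℕ → R) (i : ℕ) (hτa : τ (a i) = 0) (t : ℝ)
    (hcm : ∀ x : R, Commute ((RingHom.id R) x) (algebraMap ℂ R (t : ℂ))) :
    (eval₂RingHom' (RingHom.id R) (algebraMap ℂ R (t : ℂ)) hcm) (Fp τ τ' a b i)
      = (a i - algebraMap ℂ R (τ (a i) + (t : ℂ) * τ' (a i)))
        * (b i - algebraMap ℂ R (τ (b i) + (t : ℂ) * τ' (b i))) := by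
  have h2 : b i - algebraMap ℂ R (τ (b i) + (t : ℂ) * τ' (b i))
      = bcF τ b i - algebraMap ℂ R ((t : ℂ) * τ' (b i)) := by
    rw [map_add, bcF, sub_sub]
  rw [hτa, zero_add, h2, Fp]
  simp only [map_add, map_mul, map_pow, eval₂RingHom'_apply, eval₂_C, eval₂_X, RingHom.id_apply]
  simp only [Algebra.algebraMap_eq_smul_one, smul_mul_assoc, mul_smul_comm,
    one_mul, mul_one, smul_smul, sub_mul, mul_sub, neg_mul, sub_smul, neg_smul,
    _root_.smul_pow, one_pow]
  module

lemma eval₂_Pp (τ τ' : R →ₗ[ℂ] ℂ) (a b : ℕ → R) (n : ℕ) (hτa : ∀ i, τ (a i) = 0) (t : ℝ)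
    (hcm : ∀ x : R, Commute ((RingHom.id R) x) (algebraMap ℂ R (t : ℂ))) :
    (eval₂RingHom' (RingHom.id R) (algebraMap ℂ R (t : ℂ)) hcm) (Pp τ τ' a b n)
      = ((List.range n).map (fun i =>
          (a i - algebraMap ℂ R (τ (a i) + (t : ℂ) * τ' (a i)))
            * (b i - algebraMap ℂ R (τ (b i) + (t : ℂ) * τ' (b i))))).prod := by
  rw [Pp, map_list_prod, List.map_map]
  exact congrArg _ (List.map_congr_left fun i _ => eval₂_Fp τ τ' a b i (hτa i) t hcm)

end Poly


/-- Proposition 3.11 (one direction): in an infinitesimal noncommutative probability space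
`(C, τ', τ)`, if the ideal generated by `A` over `B` lies in `ker τ` and `(A, B)` is
cyclically monotone with respect to `(τ', τ)`, then `A` and `B` are infinitesimally free:
with `τ_t = τ + tτ'`, the alternating centered moments are `o(t)` as `t → 0`. -/
theorem infinitesimally_free_of_cyclic_monotone
    {C : Type*} [Ring C] [StarRing C] [Algebra ℂ C] [StarModule ℂ C]
    (A : NonUnitalStarSubalgebra ℂ C) (B : StarSubalgebra ℂ C)
    (τ τ' : C →ₗ[ℂ] ℂ)
    (hτ1 : τ 1 = 1) (hτ'1 : τ' 1 = 0)
    (hτtr : ∀ x y : C, τ (x * y) = τ (y * x))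
    (hτ'tr : ∀ x y : C, τ' (x * y) = τ' (y * x))
    (hker : ∀ w ∈ cyclicWords A B, τ w = 0)
    (hcm : ∀ (n : ℕ) (a b : ℕ → C), 1 ≤ n → (∀ i, a i ∈ A) → (∀ i, b i ∈ B) →
      τ' (((List.range n).map (fun i => a i * b i)).prod)
        = τ' (((List.range n).map a).prod) * ∏ i ∈ Finset.range n, τ (b i)) :
    ∀ (n : ℕ), 1 ≤ n → ∀ (a b : ℕ → C), (∀ i, a i ∈ A) → (∀ i, b i ∈ B) →
      (fun t : ℝ =>
          τ (((List.range n).map (fun i =>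
                (a i - algebraMap ℂ C (τ (a i) + (t : ℂ) * τ' (a i)))
                  * (b i - algebraMap ℂ C (τ (b i) + (t : ℂ) * τ' (b i))))).prod)
            + (t : ℂ) * τ' (((List.range n).map (fun i =>
                (a i - algebraMap ℂ C (τ (a i) + (t : ℂ) * τ' (a i)))
                  * (b i - algebraMap ℂ C (τ (b i) + (t : ℂ) * τ' (b i))))).prod))
        =o[nhds (0 : ℝ)] (fun t : ℝ => t) := by
  classical
  intro n hn a b hA hB
  -- basic scalar facts
  have hτalg : ∀ z : ℂ, τ (algebraMap ℂ C z) = z := by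
    intro z
    rw [Algebra.algebraMap_eq_smul_one, map_smul, hτ1, smul_eq_mul, mul_one]
  have hτa : ∀ i, τ (a i) = 0 := by
    intro i
    refine hker _ (aWords_subset_cyclicWords A B
      ⟨1, fun _ => a i, fun _ => Or.inl (hA i), ⟨0, one_pos, hA i⟩, by simp⟩)
  have hbcB : ∀ i, bcF τ b i ∈ (B : Set C) := fun i =>
    sub_mem (hB i) (algebraMap_mem B _)
  have hτbc : ∀ i, τ (bcF τ b i) = 0 := by
    intro i
    simp [bcF, map_sub, hτalg]
  -- the submodule E containing coeff 1 of the product polynomial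
  set E : Submodule ℂ C :=
    Submodule.span ℂ (aWords A B ∪ Set.range (bcF τ b)) with hE
  have haE : aWords A B ⊆ (E : Set C) := fun w hw =>
    Submodule.subset_span (Or.inl hw)
  have hbcE : ∀ i, bcF τ b i ∈ E := fun i =>
    Submodule.subset_span (Or.inr ⟨i, rfl⟩)
  have hEker : ∀ x ∈ E, τ x = 0 := by
    intro x hx
    have : E ≤ LinearMap.ker τ := by
      rw [hE, Submodule.span_le]
      rintro w (hw | ⟨i, rfl⟩)
      · exact hker _ (aWords_subset_cyclicWords A B hw)
      · exact hτbc i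
    exact this hx
  -- multiplication closure of E
  have hEmul : ∀ x ∈ E, ∀ j, x * (a j * bcF τ b j) ∈ E := by
    intro x hx j
    induction hx using Submodule.span_induction with
    | mem w hw =>
        rcases hw with hw | ⟨i, rfl⟩
        · refine haE ?_
          rw [← mul_assoc]
          exact aWords_mul_letter A B (aWords_mul_letter A B hw (Or.inl (hA j))) (Or.inr (hbcB j))
        · refine haE ⟨3, fun k => if k = 0 then bcF τ b i else if k = 1 then a j else bcF τ b j,
            ?_, ⟨1, by omega, by simp [hA j]⟩, ?_⟩
          · intro k
            rcases k with _ | _ | k <;> simp [hbcB i, hA j, hbcB j]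
          · simp [List.range_succ, mul_assoc]
    | zero => simpa using zero_mem E
    | add y z hy hz ihy ihz => simpa [add_mul] using add_mem ihy ihz
    | smul c y hy ihy => simpa [smul_mul_assoc] using Submodule.smul_mem E c ihy
  -- the word `W m * a m`
  set cw : ℕ → C := fun k => if k % 2 = 0 then a (k / 2) else bcF τ b (k / 2) with hcw
  have hcwmem : ∀ k, cw k ∈ (A : Set C) ∪ (B : Set C) := by
    intro k
    by_cases h : k % 2 = 0 <;> simp [hcw, h, hA (k / 2), hbcB (k / 2)]
  have hWword : ∀ m, ((List.range (2 * m + 1)).map cw).prod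
      = ((List.range m).map (fun i => a i * bcF τ b i)).prod * a m := by
    intro m
    induction m with
    | zero => simp [hcw, List.range_succ]
    | succ k ih =>
        have e1 : 2 * (k + 1) + 1 = (2 * k + 1) + 1 + 1 := by ring
        have e2 : (2 * k + 1) % 2 = 1 := by omega
        have e3 : (2 * k + 1) / 2 = k := by omega
        have e4 : (2 * k + 1 + 1) % 2 = 0 := by omega
        have e5 : (2 * k + 1 + 1) / 2 = k + 1 := by omega
        rw [e1, List.range_succ, List.range_succ, List.map_append, List.map_append,
          List.prod_append, List.prod_append, List.map_singleton, List.map_singleton,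
          List.prod_singleton, List.prod_singleton, ih, List.range_succ, List.map_append,
          List.prod_append, List.map_singleton, List.prod_singleton]
        simp only [hcw, e2, e3, e4, e5]
        norm_num [mul_assoc]
  have hWa : ∀ m, ((List.range m).map (fun i => a i * bcF τ b i)).prod * a m ∈ aWords A B := by
    intro m
    exact ⟨2 * m + 1, cw, hcwmem, ⟨0, by omega, by simp [hcw, hA 0]⟩, (hWword m).symm⟩
  have hWA : ∀ m, ((List.range (m + 1)).map (fun i => a i * bcF τ b i)).prod ∈ aWords A B := by
    intro m
    rw [List.range_succ, List.map_append, List.prod_append, List.map_singleton,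
      List.prod_singleton, ← mul_assoc]
    exact aWords_mul_letter A B (hWa m) (Or.inr (hbcB m))
  have hWbc : ∀ m, ((List.range m).map (fun i => a i * bcF τ b i)).prod * bcF τ b m ∈ E := by
    intro m
    rcases m with _ | k
    · simpa using hbcE 0
    · exact haE (aWords_mul_letter A B (hWA k) (Or.inr (hbcB (k + 1))))
  -- coefficient one of the product polynomial lies in E
  have hcoeff1 : ∀ m, (Pp τ τ' a b m).coeff 1 ∈ E := by
    intro m
    induction m with
    | zero =>
        simpa only [Pp, List.range_zero, List.map_nil, List.prod_nil, Polynomial.coeff_one,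
          if_neg one_ne_zero] using zero_mem E
    | succ k ih =>
        have hsplit : Pp τ τ' a b (k + 1) = Pp τ τ' a b k * Fp τ τ' a b k := by
          simp [Pp, List.range_succ]
        rw [hsplit, coeff_one_mul', coeff_Pp_zero, coeff_Fp_zero, coeff_Fp_one]
        refine add_mem ?_ (hEmul _ ih k)
        have h1 : ((List.range k).map (fun i => a i * bcF τ b i)).prod
              * (-(a k * algebraMap ℂ C (τ' (b k))) - algebraMap ℂ C (τ' (a k)) * bcF τ b k)
            = -((τ' (b k)) • (((List.range k).map (fun i => a i * bcF τ b i)).prod * a k))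
              - (τ' (a k)) • (((List.range k).map (fun i => a i * bcF τ b i)).prod
                  * bcF τ b k) := by
          rw [mul_sub, mul_neg]
          congr 1
          · congr 1
            rw [← Algebra.commutes (τ' (b k)), ← Algebra.smul_def, mul_smul_comm]
          · rw [← mul_assoc, ← Algebra.commutes (τ' (a k)), ← Algebra.smul_def,
              smul_mul_assoc]
        rw [h1]
        exact sub_mem (neg_mem (Submodule.smul_mem E _ (haE (hWa k))))
          (Submodule.smul_mem E _ (hWbc k))
  -- the three vanishing statements
  have hτP0 : τ ((Pp τ τ' a b n).coeff 0) = 0 := by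
    rw [coeff_Pp_zero]
    obtain ⟨k, rfl⟩ : ∃ k, n = k + 1 := ⟨n - 1, by omega⟩
    exact hker _ (aWords_subset_cyclicWords A B (hWA k))
  have hτP1 : τ ((Pp τ τ' a b n).coeff 1) = 0 := hEker _ (hcoeff1 n)
  have hτ'P0 : τ' ((Pp τ τ' a b n).coeff 0) = 0 := by
    rw [coeff_Pp_zero, hcm n a (bcF τ b) hn hA hbcB,
      Finset.prod_eq_zero (Finset.mem_range.mpr hn) (hτbc 0), mul_zero]
  -- scalar polynomials
  set pτ : Polynomial ℂ := mapLin τ (Pp τ τ' a b n) with hpτ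
  set pτ' : Polynomial ℂ := mapLin τ' (Pp τ τ' a b n) with hpτ'
  have hc0 : pτ.coeff 0 = 0 := by rw [hpτ, coeff_mapLin]; exact hτP0
  have hc1 : pτ.coeff 1 = 0 := by rw [hpτ, coeff_mapLin]; exact hτP1
  have hc0' : pτ'.coeff 0 = 0 := by rw [hpτ', coeff_mapLin]; exact hτ'P0
  -- divide by X
  have hdiv : ∀ p : Polynomial ℂ, p.coeff 0 = 0 → ∀ z : ℂ, p.eval z = z * (p.divX.eval z) := by
    intro p h z
    conv_lhs => rw [← Polynomial.X_mul_divX_add p]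
    simp [h]
  have hevalτ : ∀ z : ℂ, pτ.eval z = z * (z * (pτ.divX.divX.eval z)) := by
    intro z
    rw [hdiv pτ hc0 z, hdiv pτ.divX (by rw [Polynomial.coeff_divX]; exact hc1) z]
  have hevalτ' : ∀ z : ℂ, pτ'.eval z = z * (pτ'.divX.eval z) := fun z => hdiv pτ' hc0' z
  -- pointwise identity
  have hcomm : ∀ (t : ℝ) (x : C), Commute ((RingHom.id C) x) (algebraMap ℂ C (t : ℂ)) :=
    fun t x => (Algebra.commutes ((t : ℝ) : ℂ) x).symm
  have key : ∀ t : ℝ,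
      τ (((List.range n).map (fun i =>
            (a i - algebraMap ℂ C (τ (a i) + (t : ℂ) * τ' (a i)))
              * (b i - algebraMap ℂ C (τ (b i) + (t : ℂ) * τ' (b i))))).prod)
        + (t : ℂ) * τ' (((List.range n).map (fun i =>
            (a i - algebraMap ℂ C (τ (a i) + (t : ℂ) * τ' (a i)))
              * (b i - algebraMap ℂ C (τ (b i) + (t : ℂ) * τ' (b i))))).prod)
      = (t : ℂ) * ((t : ℂ) * ((pτ.divX.divX + pτ'.divX).eval (t : ℂ))) := by
    intro t
    rw [← eval₂_Pp τ τ' a b n hτa t (hcomm t)]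
    have e1 : τ ((eval₂RingHom' (RingHom.id C) (algebraMap ℂ C (t : ℂ)) (hcomm t))
        (Pp τ τ' a b n)) = pτ.eval (t : ℂ) := by
      rw [Polynomial.eval₂RingHom'_apply, hpτ, eval_mapLin]
    have e2 : τ' ((eval₂RingHom' (RingHom.id C) (algebraMap ℂ C (t : ℂ)) (hcomm t))
        (Pp τ τ' a b n)) = pτ'.eval (t : ℂ) := by
      rw [Polynomial.eval₂RingHom'_apply, hpτ', eval_mapLin]
    rw [e1, e2, hevalτ, hevalτ']
    simp [Polynomial.eval_add]
    ring
  -- asymptotics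
  have hbig : (fun t : ℝ => ((t : ℝ) : ℂ)) =O[nhds (0:ℝ)] fun t : ℝ => t :=
    Asymptotics.isBigO_of_le _ (fun t => by simp)
  have hsmall : (fun t : ℝ => ((t : ℝ) : ℂ) * ((pτ.divX.divX + pτ'.divX).eval ((t : ℝ) : ℂ))) =o[nhds (0:ℝ)] (fun _ : ℝ => (1 : ℝ)) := by
    rw [Asymptotics.isLittleO_one_iff]
    have hco : Continuous fun t : ℝ => ((t : ℝ) : ℂ) * ((pτ.divX.divX
        + pτ'.divX).eval ((t : ℝ) : ℂ)) :=
      Complex.continuous_ofReal.mul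
        ((Polynomial.continuous _).comp Complex.continuous_ofReal)
    simpa using hco.tendsto 0
  have hfinal := hbig.mul_isLittleO hsmall
  exact hfinal.congr' (Filter.Eventually.of_forall fun t => (key t).symm)
    (Filter.Eventually.of_forall fun t => mul_one t)
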